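/- Let d ≥ 2, let Q be Haar-distributed on the orthogonal group O(d), and let a, b ≥ 0 be real numbers and z ∈ ℝ^d. Then E_Q[ cos(a·⟨Q e₁, z⟩) · cos(b·⟨Q e₂, z⟩) ] = Σ_{k=0}^∞ (−1)^k ‖z‖^{2k} (a² + b²)^k · Γ(d/2) / (4^k · k! · Γ(k + d/2)). (This is the expected product of two random Fourier feature basis functions with orthogonal, jointly isotropic frequency directions of fixed norms a and b.) -/

import Mathlib

set_option maxHeartbeats 1000000
set_option synthInstance.maxHeartbeats 400000


open MeasureTheory
open MeasureTheory Real Set Matrix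

noncomputable section

/-- The Borel measurable structure on `d × d` real matrices (the product σ-algebra). -/
instance matrixMeasurableSpace (d : ℕ) : MeasurableSpace (Matrix (Fin d) (Fin d) ℝ) :=
  inferInstanceAs (MeasurableSpace (Fin d → Fin d → ℝ))


private lemma gammaNatHalf (k : ℕ) :
    Real.Gamma ((k:ℝ) + 1/2) = Real.sqrt π * (2*k).factorial / (4^k * k.factorial) := by
  induction k with
  | zero => norm_num [Real.Gamma_one_half_eq]
  | succ n ih =>
      have h : ((n+1 : ℕ):ℝ) + 1/2 = ((n:ℝ) + 1/2) + 1 := by push_cast; ring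
      rw [h, Real.Gamma_add_one (by positivity), ih]
      have h2 : 2*(n+1) = (2*n+1)+1 := by ring
      rw [h2, Nat.factorial_succ, Nat.factorial_succ, Nat.factorial_succ]
      have h4 : (4:ℝ)^(n+1) = 4 * 4^n := by ring
      push_cast [h4]
      have hn : (0:ℝ) < n.factorial := by positivity
      field_simp
      ring

private lemma integral_pow_exp_neg_sq_Ioi (m : ℕ) :
    ∫ x in Ioi (0:ℝ), x ^ m * Real.exp (-x^2) = (1/2) * Real.Gamma ((m+1)/2) := by
  have h := integral_rpow_mul_exp_neg_rpow (p := 2) (q := m) (by norm_num)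
    (lt_of_lt_of_le neg_one_lt_zero (Nat.cast_nonneg m))
  rw [show ((m:ℝ)+1)/2 = ((m:ℝ)+1)/2 from rfl]
  rw [← h]
  refine setIntegral_congr_fun measurableSet_Ioi (fun x hx => ?_)
  rw [Real.rpow_natCast, Real.rpow_two]

private lemma integral_pow_exp_neg_sq (k : ℕ) :
    ∫ x : ℝ, x ^ (2*k) * Real.exp (-x^2) = Real.Gamma ((k:ℝ) + 1/2) := by
  have he : ∀ x : ℝ, |x| ^ (2*k) * Real.exp (-|x|^2) = x ^ (2*k) * Real.exp (-x^2) := by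
    intro x
    rw [pow_mul, sq_abs, ← pow_mul]
  calc ∫ x : ℝ, x ^ (2*k) * Real.exp (-x^2)
      = ∫ x : ℝ, |x| ^ (2*k) * Real.exp (-|x|^2) := by simp_rw [he]
    _ = 2 * ∫ x in Ioi (0:ℝ), x ^ (2*k) * Real.exp (-x^2) :=
        integral_comp_abs (f := fun x => x ^ (2*k) * Real.exp (-x^2))
    _ = Real.Gamma ((k:ℝ) + 1/2) := by
        rw [integral_pow_exp_neg_sq_Ioi]
        rw [show ((2*k:ℕ):ℝ) = 2*k by push_cast; ring]
        ring_nf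

variable {d : ℕ}

local notation "E" d => EuclideanSpace ℝ (Fin d)

private lemma norm_sq_eq_sum (z : EuclideanSpace ℝ (Fin d)) : ‖z‖^2 = ∑ i, z i ^ 2 := by
  rw [EuclideanSpace.norm_eq, Real.sq_sqrt (by positivity)]
  simp [sq_abs]

private lemma real_inner_euclidean (x y : EuclideanSpace ℝ (Fin d)) :
    (inner ℝ x y : ℝ) = ∑ i, x i * y i := by
  simp [PiLp.inner_apply, RCLike.inner_apply]
  exact Finset.sum_congr rfl fun _ _ => mul_comm _ _

private lemma integral_single_pow (i0 : Fin d) (k : ℕ) :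
    ∫ z : EuclideanSpace ℝ (Fin d), (z i0)^(2*k) * Real.exp (-‖z‖^2)
      = Real.Gamma ((k:ℝ) + 1/2) * Real.sqrt π ^ (d - 1) := by
  have hmp := (EuclideanSpace.volume_preserving_symm_measurableEquiv_toLp (Fin d))
  have hme : MeasurableEmbedding ((MeasurableEquiv.toLp 2 (Fin d → ℝ)).symm) :=
    ((MeasurableEquiv.toLp 2 (Fin d → ℝ)).symm).measurableEmbedding
  set g : (Fin d → ℝ) → ℝ := fun y =>
    ∏ i, ((if i = i0 then (y i)^(2*k) else 1) * Real.exp (-(y i)^2)) with hg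
  have key : ∀ z : EuclideanSpace ℝ (Fin d),
      (z i0)^(2*k) * Real.exp (-‖z‖^2) = g (((MeasurableEquiv.toLp 2 (Fin d → ℝ)).symm) z) := by
    intro z
    rw [hg]
    show _ = ∏ i, ((if i = i0 then (z i)^(2*k) else 1) * Real.exp (-(z i)^2))
    rw [Finset.prod_mul_distrib, Finset.prod_ite_eq', ← Real.exp_sum, norm_sq_eq_sum]
    simp [Finset.sum_neg_distrib]
  calc ∫ z : EuclideanSpace ℝ (Fin d), (z i0)^(2*k) * Real.exp (-‖z‖^2)
      = ∫ z : EuclideanSpace ℝ (Fin d), g (((MeasurableEquiv.toLp 2 (Fin d → ℝ)).symm) z) := by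
        simp_rw [key]
    _ = ∫ y : Fin d → ℝ, g y := hmp.integral_comp hme g
    _ = ∏ i, ∫ t : ℝ, (if i = i0 then t^(2*k) else 1) * Real.exp (-t^2) :=
        integral_fintype_prod_eq_prod
          (fun i t => (if i = i0 then t^(2*k) else 1) * Real.exp (-t^2))
    _ = Real.Gamma ((k:ℝ) + 1/2) * Real.sqrt π ^ (d - 1) := by
        have hval : ∀ i : Fin d, (∫ t : ℝ, (if i = i0 then t^(2*k) else 1) * Real.exp (-t^2))
            = if i = i0 then Real.Gamma ((k:ℝ) + 1/2) else Real.sqrt π := by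
          intro i
          by_cases h : i = i0
          · simp only [h, if_true]
            exact integral_pow_exp_neg_sq k
          · simp only [h, if_false, one_mul]
            have := integral_gaussian 1
            simpa using this
        simp_rw [hval]
        rw [← Finset.prod_erase_mul _ _ (Finset.mem_univ i0), if_pos rfl]
        rw [Finset.prod_congr rfl (fun i hi => if_neg (Finset.ne_of_mem_erase hi)),
          Finset.prod_const, Finset.card_erase_of_mem (Finset.mem_univ i0)]
        simp [mul_comm]

private lemma exists_onb_eq (u : EuclideanSpace ℝ (Fin d)) (hu : ‖u‖ = 1) (i0 : Fin d) :
    ∃ b : OrthonormalBasis (Fin d) ℝ (EuclideanSpace ℝ (Fin d)), b i0 = u := by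
  have hcard : Module.finrank ℝ (EuclideanSpace ℝ (Fin d)) = Fintype.card (Fin d) := by
    simp [finrank_euclideanSpace_fin]
  have horth : Orthonormal ℝ (({i0} : Set (Fin d)).restrict (fun _ => u)) := by
    constructor
    · intro i; exact hu
    · intro i j hij
      exact absurd (Subtype.ext (by
        have hi := i.2; have hj := j.2
        simp only [Set.mem_singleton_iff] at hi hj
        rw [hi, hj])) hij
  obtain ⟨b, hb⟩ := horth.exists_orthonormalBasis_extension_of_card_eq hcard
  exact ⟨b, hb i0 rfl⟩

private lemma gauss_inner (hd : 1 ≤ d) (w : EuclideanSpace ℝ (Fin d)) (k : ℕ) :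
    ∫ z : EuclideanSpace ℝ (Fin d), (∑ i, w i * z i)^(2*k) * Real.exp (-‖z‖^2)
      = ‖w‖^(2*k) * (Real.Gamma ((k:ℝ) + 1/2) * Real.sqrt π ^ (d - 1)) := by
  have i0 : Fin d := ⟨0, hd⟩
  by_cases hw : w = 0
  · subst hw
    rcases Nat.eq_zero_or_pos k with hk | hk
    · subst hk
      simpa using integral_single_pow i0 0
    · have h1 : ∀ z : EuclideanSpace ℝ (Fin d),
          (∑ i, (0 : EuclideanSpace ℝ (Fin d)) i * z i)^(2*k) * Real.exp (-‖z‖^2) = 0 := by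
        intro z
        simp [zero_pow (by omega : 2*k ≠ 0)]
      simp_rw [h1]
      rw [integral_zero]
      rw [norm_zero, zero_pow (by omega : 2*k ≠ 0), zero_mul]
  · set u : EuclideanSpace ℝ (Fin d) := ‖w‖⁻¹ • w with hu_def
    have hwn : ‖w‖ ≠ 0 := norm_ne_zero_iff.mpr hw
    have hu : ‖u‖ = 1 := by
      rw [hu_def, norm_smul]
      simp [abs_of_nonneg (inv_nonneg.mpr (norm_nonneg w)), inv_mul_cancel₀ hwn]
    obtain ⟨b, hb⟩ := exists_onb_eq u hu i0
    set f := b.repr.symm with hf_def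
    have hmp : MeasurePreserving f := f.measurePreserving
    have hme : MeasurableEmbedding f := f.toHomeomorph.measurableEmbedding
    have hfu : f (EuclideanSpace.single i0 1) = u := by
      rw [hf_def, OrthonormalBasis.repr_symm_single, hb]
    have key : ∀ z : EuclideanSpace ℝ (Fin d),
        (∑ i, w i * (f z) i)^(2*k) * Real.exp (-‖f z‖^2)
          = ‖w‖^(2*k) * ((z i0)^(2*k) * Real.exp (-‖z‖^2)) := by
      intro z
      have h1 : ∑ i, w i * (f z) i = ‖w‖ * z i0 := by
        have hw_eq : w = ‖w‖ • u := by
          rw [hu_def, smul_smul, mul_inv_cancel₀ hwn, one_smul]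
        have h2 : (inner ℝ u (f z) : ℝ) = z i0 := by
          rw [← hfu, f.inner_map_map, real_inner_euclidean]
          rw [Finset.sum_eq_single i0]
          · simp [EuclideanSpace.single_apply]
          · intro i _ hi
            simp [EuclideanSpace.single_apply, hi]
          · intro h; exact absurd (Finset.mem_univ i0) h
        calc ∑ i, w i * (f z) i = (inner ℝ w (f z) : ℝ) := (real_inner_euclidean _ _).symm
          _ = (inner ℝ (‖w‖ • u) (f z) : ℝ) := by rw [← hw_eq]
          _ = ‖w‖ * (inner ℝ u (f z) : ℝ) := by rw [inner_smul_left]; simp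
          _ = ‖w‖ * z i0 := by rw [h2]
      rw [h1, f.norm_map, mul_pow, mul_assoc]
    calc ∫ z : EuclideanSpace ℝ (Fin d), (∑ i, w i * z i)^(2*k) * Real.exp (-‖z‖^2)
        = ∫ z : EuclideanSpace ℝ (Fin d), (∑ i, w i * (f z) i)^(2*k) * Real.exp (-‖f z‖^2) :=
          (hmp.integral_comp hme fun y => (∑ i, w i * y i)^(2*k) * Real.exp (-‖y‖^2)).symm
      _ = ∫ z : EuclideanSpace ℝ (Fin d), ‖w‖^(2*k) * ((z i0)^(2*k) * Real.exp (-‖z‖^2)) := by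
          simp_rw [key]
      _ = ‖w‖^(2*k) * (Real.Gamma ((k:ℝ) + 1/2) * Real.sqrt π ^ (d - 1)) := by
          rw [integral_const_mul, integral_single_pow i0 k]

private lemma gauss_norm (hd : 1 ≤ d) (k : ℕ) :
    ∫ z : EuclideanSpace ℝ (Fin d), ‖z‖^(2*k) * Real.exp (-‖z‖^2)
      = Real.sqrt π ^ d * Real.Gamma ((k:ℝ) + d/2) / Real.Gamma ((d:ℝ)/2) := by
  haveI : Nonempty (Fin d) := ⟨⟨0, hd⟩⟩
  haveI : Nontrivial (EuclideanSpace ℝ (Fin d)) :=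
    ⟨0, EuclideanSpace.single ⟨0, hd⟩ 1, by
      intro h
      have := congrArg (fun x : EuclideanSpace ℝ (Fin d) => x ⟨0, hd⟩) h.symm
      simp [EuclideanSpace.single_apply] at this⟩
  have hdim : Module.finrank ℝ (EuclideanSpace ℝ (Fin d)) = d := finrank_euclideanSpace_fin
  have h := integral_fun_norm_addHaar (volume : Measure (EuclideanSpace ℝ (Fin d)))
    (fun r => r^(2*k) * Real.exp (-r^2))
  rw [hdim] at h
  rw [h]
  have hIoi : ∫ y in Ioi (0:ℝ), y ^ (d-1) • (y^(2*k) * Real.exp (-y^2))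
      = (1/2) * Real.Gamma ((k:ℝ) + d/2) := by
    have : ∀ y : ℝ, y ^ (d-1) • (y^(2*k) * Real.exp (-y^2))
        = y ^ ((d-1) + 2*k) * Real.exp (-y^2) := by
      intro y
      rw [smul_eq_mul, ← mul_assoc, ← pow_add]
    simp_rw [this]
    rw [integral_pow_exp_neg_sq_Ioi]
    congr 1
    have : (((d-1) + 2*k : ℕ) : ℝ) = (d:ℝ) - 1 + 2*k := by
      push_cast [Nat.cast_sub hd]
      ring
    rw [this]
    ring
  have hball : ((volume : Measure (EuclideanSpace ℝ (Fin d))) (Metric.ball 0 1)).toReal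
      = Real.sqrt π ^ d / Real.Gamma ((d:ℝ)/2 + 1) := by
    rw [EuclideanSpace.volume_ball, Fintype.card_fin]
    rw [ENNReal.toReal_mul]
    rw [ENNReal.toReal_pow, ENNReal.toReal_ofReal (by norm_num), one_pow, one_mul]
    rw [ENNReal.toReal_ofReal (by positivity)]
  rw [hIoi, measureReal_def, hball]
  have hGpos : 0 < Real.Gamma ((d:ℝ)/2) := Real.Gamma_pos_of_pos (by positivity)
  have hG1 : Real.Gamma ((d:ℝ)/2 + 1) = ((d:ℝ)/2) * Real.Gamma ((d:ℝ)/2) :=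
    Real.Gamma_add_one (by positivity)
  rw [hG1, nsmul_eq_mul]
  have hd0 : (0:ℝ) < d := by exact_mod_cast hd
  field_simp
  have hA : Real.Gamma ((d:ℝ) * (1/2)) ≠ 0 := by rw [← div_eq_mul_one_div]; exact hGpos.ne'
  have hdn : (d:ℝ) ≠ 0 := hd0.ne'
  calc _ = ((d:ℝ) * (d:ℝ)⁻¹) * (Real.Gamma ((d:ℝ) * (1/2)) * (Real.Gamma ((d:ℝ) * (1/2)))⁻¹)
        * (Real.Gamma ((d:ℝ) * (1/2) + k) * Real.sqrt π ^ d) := by ring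
    _ = _ := by rw [mul_inv_cancel₀ hdn, mul_inv_cancel₀ hA]; ring

abbrev OG (d : ℕ) := Matrix.orthogonalGroup (Fin d) ℝ

private lemma star_coe (Q : OG d) : star (Q : Matrix (Fin d) (Fin d) ℝ) = (Q : Matrix (Fin d) (Fin d) ℝ)ᵀ := by
  ext i j
  simp [Matrix.star_apply]

private lemma transpose_mul_self (Q : OG d) :
    (Q : Matrix (Fin d) (Fin d) ℝ)ᵀ * (Q : Matrix (Fin d) (Fin d) ℝ) = 1 := by
  rw [← star_coe]
  exact Q.2.1

private lemma mulVec_dot_self (Q : OG d) (v : Fin d → ℝ) :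
    dotProduct ((Q : Matrix (Fin d) (Fin d) ℝ).mulVec v)
      ((Q : Matrix (Fin d) (Fin d) ℝ).mulVec v) = dotProduct v v := by
  rw [Matrix.dotProduct_mulVec, ← Matrix.mulVec_transpose, Matrix.mulVec_mulVec,
    transpose_mul_self, Matrix.one_mulVec]

private lemma measurable_entry (i j : Fin d) :
    Measurable fun Q : OG d => (Q : Matrix (Fin d) (Fin d) ℝ) i j :=
  (measurable_pi_apply j).comp ((measurable_pi_apply i).comp measurable_subtype_coe)

private lemma measurable_S (v z : Fin d → ℝ) :
    Measurable fun Q : OG d => ∑ i, ((Q : Matrix (Fin d) (Fin d) ℝ).mulVec v) i * z i := by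
  apply Finset.measurable_sum
  intro i _
  apply Measurable.mul _ measurable_const
  show Measurable fun Q : OG d => ∑ j, (Q : Matrix (Fin d) (Fin d) ℝ) i j * v j
  exact Finset.measurable_sum _ fun j _ => (measurable_entry i j).mul measurable_const

private lemma measurable_mul_left (g : OG d) : Measurable fun q : OG d => g * q := by
  have h : Measurable fun q : OG d =>
      ((g : Matrix (Fin d) (Fin d) ℝ) * (q : Matrix (Fin d) (Fin d) ℝ)) := by
    apply measurable_pi_lambda
    intro i
    apply measurable_pi_lambda
    intro j
    simp_rw [Matrix.mul_apply]
    exact Finset.measurable_sum _ fun k _ => measurable_const.mul (measurable_entry k j)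
  exact h.subtype_mk

private lemma integral_left_inv (μ : Measure (OG d)) [IsProbabilityMeasure μ]
    (hinv : ∀ g : OG d, μ.map (fun q => g * q) = μ) (g : OG d) (f : OG d → ℝ)
    (hf : AEStronglyMeasurable f μ) :
    ∫ q, f (g * q) ∂μ = ∫ q, f q ∂μ := by
  conv_rhs => rw [← hinv g]
  rw [integral_map (measurable_mul_left g).aemeasurable]
  rw [hinv g]
  exact hf

private lemma exists_rot (z : EuclideanSpace ℝ (Fin d)) (hz : z ≠ 0) (i0 : Fin d) :
    ∃ g : OG d, (g : Matrix (Fin d) (Fin d) ℝ)ᵀ.mulVec z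
      = fun j => ‖z‖ * (if j = i0 then 1 else 0) := by
  have hzn : ‖z‖ ≠ 0 := norm_ne_zero_iff.mpr hz
  set u : EuclideanSpace ℝ (Fin d) := ‖z‖⁻¹ • z with hu_def
  have hu : ‖u‖ = 1 := by
    rw [hu_def, norm_smul]
    simp [abs_of_nonneg (inv_nonneg.mpr (norm_nonneg z)), inv_mul_cancel₀ hzn]
  obtain ⟨b, hb⟩ := exists_onb_eq u hu i0
  have horth := b.orthonormal
  set M : Matrix (Fin d) (Fin d) ℝ := Matrix.of fun i j => b j i with hM_def
  have hM : M ∈ Matrix.orthogonalGroup (Fin d) ℝ := by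
    rw [Matrix.mem_orthogonalGroup_iff']
    ext j j'
    rw [Matrix.mul_apply, Matrix.one_apply]
    have := orthonormal_iff_ite.mp horth j j'
    rw [real_inner_euclidean] at this
    rw [← this]
    apply Finset.sum_congr rfl
    intro i _
    simp [hM_def, Matrix.star_apply]
  refine ⟨⟨M, hM⟩, ?_⟩
  funext j
  have hz_eq : z = ‖z‖ • u := by
    rw [hu_def, smul_smul, mul_inv_cancel₀ hzn, one_smul]
  have : (Mᵀ.mulVec z) j = (inner ℝ (b j) z : ℝ) := by
    rw [Matrix.mulVec, real_inner_euclidean]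
    apply Finset.sum_congr rfl
    intro i _
    simp [hM_def, Matrix.transpose_apply, mul_comm]
  have h2 : (inner ℝ (b j) z : ℝ) = ‖z‖ * if j = i0 then 1 else 0 := by
    conv_lhs => rw [hz_eq, inner_smul_right, ← hb]
    rw [orthonormal_iff_ite.mp horth j i0]
  rw [this, h2]

private lemma moment_reduce (μ : Measure (OG d)) [IsProbabilityMeasure μ]
    (hinv : ∀ g : OG d, μ.map (fun q => g * q) = μ) (i0 : Fin d)
    (v : Fin d → ℝ) (z : EuclideanSpace ℝ (Fin d)) (k : ℕ) :
    ∫ Q : OG d, (∑ i, ((Q : Matrix (Fin d) (Fin d) ℝ).mulVec v) i * z i)^(2*k) ∂μ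
      = ‖z‖^(2*k) * ∫ Q : OG d, (((Q : Matrix (Fin d) (Fin d) ℝ).mulVec v) i0)^(2*k) ∂μ := by
  by_cases hz : z = 0
  · subst hz
    rcases Nat.eq_zero_or_pos k with hk | hk
    · subst hk
      simp
    · have h1 : ∀ Q : OG d,
          (∑ i, ((Q : Matrix (Fin d) (Fin d) ℝ).mulVec v) i * (0 : EuclideanSpace ℝ (Fin d)) i)^(2*k)
            = (0:ℝ) := by
        intro Q
        have : ∀ i : Fin d, ((Q : Matrix (Fin d) (Fin d) ℝ).mulVec v) i
            * (0 : EuclideanSpace ℝ (Fin d)) i = 0 := by intro i; simp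
        simp only [this, Finset.sum_const_zero]
        exact zero_pow (by omega)
      simp_rw [h1]
      rw [integral_zero, norm_zero, zero_pow (by omega : 2*k ≠ 0), zero_mul]
  · obtain ⟨g, hg⟩ := exists_rot z hz i0
    have hmeas : AEStronglyMeasurable
        (fun Q : OG d => (∑ i, ((Q : Matrix (Fin d) (Fin d) ℝ).mulVec v) i * z i)^(2*k)) μ :=
      ((measurable_S v (fun i => z i)).pow_const (2*k)).aestronglyMeasurable
    rw [← integral_left_inv μ hinv g _ hmeas]
    have key : ∀ Q : OG d,
        (∑ i, (((g * Q : OG d) : Matrix (Fin d) (Fin d) ℝ).mulVec v) i * z i)^(2*k)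
          = ‖z‖^(2*k) * (((Q : Matrix (Fin d) (Fin d) ℝ).mulVec v) i0)^(2*k) := by
      intro Q
      have h1 : ∑ i, (((g * Q : OG d) : Matrix (Fin d) (Fin d) ℝ).mulVec v) i * z i
          = ‖z‖ * ((Q : Matrix (Fin d) (Fin d) ℝ).mulVec v) i0 := by
        have hcoe : ((g * Q : OG d) : Matrix (Fin d) (Fin d) ℝ)
            = (g : Matrix (Fin d) (Fin d) ℝ) * (Q : Matrix (Fin d) (Fin d) ℝ) := rfl
        calc ∑ i, (((g * Q : OG d) : Matrix (Fin d) (Fin d) ℝ).mulVec v) i * z i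
            = dotProduct (((g : Matrix (Fin d) (Fin d) ℝ)
                * (Q : Matrix (Fin d) (Fin d) ℝ)).mulVec v) (fun i => z i) := by
              rw [hcoe]; rfl
          _ = dotProduct ((Q : Matrix (Fin d) (Fin d) ℝ).mulVec v)
                ((g : Matrix (Fin d) (Fin d) ℝ)ᵀ.mulVec (fun i => z i)) := by
              rw [← Matrix.mulVec_mulVec, dotProduct_comm, Matrix.dotProduct_mulVec,
                ← Matrix.mulVec_transpose, dotProduct_comm]
          _ = ‖z‖ * ((Q : Matrix (Fin d) (Fin d) ℝ).mulVec v) i0 := by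
              rw [hg]
              have heach : ∀ j : Fin d, ((Q : Matrix (Fin d) (Fin d) ℝ).mulVec v) j
                  * (‖z‖ * if j = i0 then 1 else 0)
                  = if j = i0 then ‖z‖ * ((Q : Matrix (Fin d) (Fin d) ℝ).mulVec v) j else 0 := by
                intro j
                by_cases h : j = i0 <;> simp [h] <;> ring
              show ∑ j, ((Q : Matrix (Fin d) (Fin d) ℝ).mulVec v) j
                  * (‖z‖ * if j = i0 then 1 else 0) = _
              rw [Finset.sum_congr rfl fun j _ => heach j, Finset.sum_ite_eq' Finset.univ i0]
              simp
      rw [h1, mul_pow]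
    simp_rw [key]
    exact integral_const_mul _ _

private lemma integrable_norm_pow_exp (hd : 1 ≤ d) (k : ℕ) :
    Integrable (fun z : EuclideanSpace ℝ (Fin d) => ‖z‖^(2*k) * Real.exp (-‖z‖^2)) := by
  have hgauss : Integrable (fun z : EuclideanSpace ℝ (Fin d) => Real.exp (-(1/2) * ‖z‖^2)) := by
    have hmp := (EuclideanSpace.volume_preserving_symm_measurableEquiv_toLp (Fin d))
    have hme : MeasurableEmbedding ((MeasurableEquiv.toLp 2 (Fin d → ℝ)).symm) :=
      ((MeasurableEquiv.toLp 2 (Fin d → ℝ)).symm).measurableEmbedding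
    have hprod : Integrable (fun y : Fin d → ℝ => ∏ i, Real.exp (-(1/2) * (y i)^2)) :=
      Integrable.fintype_prod fun _ => integrable_exp_neg_mul_sq (by norm_num)
    have := (hmp.integrable_comp_emb hme).mpr hprod
    refine this.congr ?_
    filter_upwards with z
    show ∏ i, Real.exp (-(1/2) * (z i)^2) = Real.exp (-(1/2) * ‖z‖^2)
    rw [← Real.exp_sum, norm_sq_eq_sum]
    congr 1
    rw [Finset.mul_sum]
  refine ((hgauss.const_mul ((2:ℝ)^k * k.factorial)).mono' ?_ ?_)
  · exact (Continuous.mul (by continuity) (by continuity)).aestronglyMeasurable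
  · filter_upwards with z
    have h1 : (0:ℝ) ≤ ‖z‖^(2*k) := by positivity
    rw [Real.norm_eq_abs, abs_of_nonneg (by positivity)]
    have h2 : ‖z‖^(2*k) ≤ 2^k * k.factorial * Real.exp ((1/2) * ‖z‖^2) := by
      have h3 := Real.pow_div_factorial_le_exp (x := ‖z‖^2/2) (by positivity) k
      have h4 : ‖z‖^(2*k) = (‖z‖^2/2)^k * 2^k := by
        rw [div_pow, pow_mul]
        field_simp
      rw [h4]
      rw [div_le_iff₀ (by positivity : (0:ℝ) < (k.factorial:ℝ))] at h3
      calc (‖z‖^2/2)^k * 2^k ≤ (Real.exp (‖z‖^2/2) * k.factorial) * 2^k := by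
            apply mul_le_mul_of_nonneg_right h3 (by positivity)
        _ = 2^k * k.factorial * Real.exp ((1/2) * ‖z‖^2) := by ring_nf
    calc ‖z‖^(2*k) * Real.exp (-‖z‖^2)
        ≤ (2^k * k.factorial * Real.exp ((1/2) * ‖z‖^2)) * Real.exp (-‖z‖^2) :=
          mul_le_mul_of_nonneg_right h2 (Real.exp_pos _).le
      _ = 2^k * k.factorial * Real.exp (-(1/2) * ‖z‖^2) := by
          rw [mul_assoc, ← Real.exp_add]
          ring_nf

private lemma S_sq_bound (Q : OG d) (v : Fin d → ℝ) (z : EuclideanSpace ℝ (Fin d)) (k : ℕ) :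
    (∑ i, ((Q : Matrix (Fin d) (Fin d) ℝ).mulVec v) i * z i)^(2*k)
      ≤ (∑ i, v i^2)^k * ‖z‖^(2*k) := by
  have hcs : (∑ i, ((Q : Matrix (Fin d) (Fin d) ℝ).mulVec v) i * z i)^2
      ≤ (∑ i, ((Q : Matrix (Fin d) (Fin d) ℝ).mulVec v) i ^2) * (∑ i, z i^2) :=
    Finset.sum_mul_sq_le_sq_mul_sq Finset.univ _ _
  have h1 : ∑ i, ((Q : Matrix (Fin d) (Fin d) ℝ).mulVec v) i ^2 = ∑ i, v i^2 := by
    have := mulVec_dot_self Q v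
    unfold dotProduct at this
    simpa [sq] using this
  rw [h1] at hcs
  calc (∑ i, ((Q : Matrix (Fin d) (Fin d) ℝ).mulVec v) i * z i)^(2*k)
      = ((∑ i, ((Q : Matrix (Fin d) (Fin d) ℝ).mulVec v) i * z i)^2)^k := by
        rw [← pow_mul]
    _ ≤ ((∑ i, v i^2) * (∑ i, z i^2))^k := pow_le_pow_left₀ (sq_nonneg _) hcs k
    _ = (∑ i, v i^2)^k * ‖z‖^(2*k) := by
        rw [mul_pow, pow_mul, norm_sq_eq_sum]

private lemma measurable_S_prod (v : Fin d → ℝ) :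
    Measurable fun p : (OG d) × EuclideanSpace ℝ (Fin d) =>
      ∑ i, ((p.1 : Matrix (Fin d) (Fin d) ℝ).mulVec v) i * p.2 i := by
  apply Finset.measurable_sum
  intro i _
  have hQ : Measurable fun p : (OG d) × EuclideanSpace ℝ (Fin d) =>
      ((p.1 : Matrix (Fin d) (Fin d) ℝ).mulVec v) i := by
    have : Measurable fun Q : OG d => ((Q : Matrix (Fin d) (Fin d) ℝ).mulVec v) i := by
      show Measurable fun Q : OG d => ∑ j, (Q : Matrix (Fin d) (Fin d) ℝ) i j * v j
      exact Finset.measurable_sum _ fun j _ => (measurable_entry i j).mul measurable_const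
    exact this.comp measurable_fst
  have hz : Measurable fun p : (OG d) × EuclideanSpace ℝ (Fin d) => p.2 i := by
    have : Measurable fun z : EuclideanSpace ℝ (Fin d) => z i :=
      (measurable_pi_apply i).comp ((MeasurableEquiv.toLp 2 (Fin d → ℝ)).symm).measurable
    exact this.comp measurable_snd
  exact hQ.mul hz

private lemma moment_value (hd : 1 ≤ d) (μ : Measure (OG d)) [IsProbabilityMeasure μ]
    (hinv : ∀ g : OG d, μ.map (fun q => g * q) = μ) (i0 : Fin d)
    (v : Fin d → ℝ) (k : ℕ) :
    ∫ Q : OG d, (((Q : Matrix (Fin d) (Fin d) ℝ).mulVec v) i0)^(2*k) ∂μ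
      = (∑ i, v i ^ 2)^k * (Real.Gamma ((k:ℝ) + 1/2) * Real.Gamma ((d:ℝ)/2)
          / (Real.sqrt π * Real.Gamma ((k:ℝ) + (d:ℝ)/2))) := by
  set F : (OG d) × EuclideanSpace ℝ (Fin d) → ℝ := fun p =>
    (∑ i, ((p.1 : Matrix (Fin d) (Fin d) ℝ).mulVec v) i * p.2 i)^(2*k)
      * Real.exp (-‖p.2‖^2) with hF_def
  have hV : (0:ℝ) ≤ ∑ i, v i^2 := by positivity
  have hFnonneg : ∀ p, 0 ≤ F p := by
    intro p
    apply mul_nonneg _ (Real.exp_pos _).le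
    rw [pow_mul]
    positivity
  have hFmeas : Measurable F := by
    apply Measurable.mul
    · exact (measurable_S_prod v).pow_const _
    · have : Continuous fun z : EuclideanSpace ℝ (Fin d) => Real.exp (-‖z‖^2) := by
        continuity
      exact this.measurable.comp measurable_snd
  -- inner integral in z for fixed Q
  have hinner : ∀ Q : OG d, ∫ z : EuclideanSpace ℝ (Fin d), F (Q, z)
      = (∑ i, v i^2)^k * (Real.Gamma ((k:ℝ) + 1/2) * Real.sqrt π ^ (d - 1)) := by
    intro Q
    have hw : ∀ i, ((Q : Matrix (Fin d) (Fin d) ℝ).mulVec v) i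
        = (WithLp.toLp 2 ((Q : Matrix (Fin d) (Fin d) ℝ).mulVec v) : EuclideanSpace ℝ (Fin d)) i :=
      fun _ => rfl
    have := gauss_inner hd (WithLp.toLp 2 ((Q : Matrix (Fin d) (Fin d) ℝ).mulVec v)) k
    simp only [WithLp.ofLp_toLp] at this
    rw [hF_def]
    simp only
    rw [this]
    congr 1
    have h2 : ‖(WithLp.toLp 2 ((Q : Matrix (Fin d) (Fin d) ℝ).mulVec v) : EuclideanSpace ℝ (Fin d))‖^2 = ∑ i, v i^2 := by
      rw [norm_sq_eq_sum]
      have := mulVec_dot_self Q v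
      unfold dotProduct at this
      simpa [sq] using this
    rw [pow_mul, h2]
  -- integrability of F over the product
  have hFint : Integrable F (μ.prod volume) := by
    rw [integrable_prod_iff hFmeas.aestronglyMeasurable]
    constructor
    · filter_upwards with Q
      apply ((integrable_norm_pow_exp hd k).const_mul ((∑ i, v i^2)^k)).mono'
      · exact (hFmeas.comp (measurable_prodMk_left (m := _))).aestronglyMeasurable
      · filter_upwards with z
        rw [Real.norm_eq_abs, abs_of_nonneg (hFnonneg _)]
        calc F (Q, z) ≤ ((∑ i, v i^2)^k * ‖z‖^(2*k)) * Real.exp (-‖z‖^2) :=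
              mul_le_mul_of_nonneg_right (S_sq_bound Q v z k) (Real.exp_pos _).le
          _ = (∑ i, v i^2)^k * (‖z‖^(2*k) * Real.exp (-‖z‖^2)) := by ring
    · apply (integrable_const ((∑ i, v i^2)^k
        * (Real.Gamma ((k:ℝ) + 1/2) * Real.sqrt π ^ (d - 1)))).congr
      filter_upwards with Q
      rw [← hinner Q]
      apply integral_congr_ae
      filter_upwards with z
      rw [Real.norm_eq_abs, abs_of_nonneg (hFnonneg _)]
  -- Fubini
  have hswap := MeasureTheory.integral_integral_swap (f := fun (Q : OG d)
    (z : EuclideanSpace ℝ (Fin d)) => F (Q, z)) (by exact hFint)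
  -- evaluate the (Q then z) side
  have hleft : ∫ Q : OG d, ∫ z : EuclideanSpace ℝ (Fin d), F (Q, z) ∂volume ∂μ
      = (∑ i, v i^2)^k * (Real.Gamma ((k:ℝ) + 1/2) * Real.sqrt π ^ (d - 1)) := by
    rw [integral_congr_ae (Filter.Eventually.of_forall fun Q => hinner Q)]
    simp [measure_univ]
  have hright : ∫ z : EuclideanSpace ℝ (Fin d), ∫ Q : OG d, F (Q, z) ∂μ ∂volume
      = (∫ Q : OG d, (((Q : Matrix (Fin d) (Fin d) ℝ).mulVec v) i0)^(2*k) ∂μ)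
          * (Real.sqrt π ^ d * Real.Gamma ((k:ℝ) + (d:ℝ)/2) / Real.Gamma ((d:ℝ)/2)) := by
    have hz : ∀ z : EuclideanSpace ℝ (Fin d), ∫ Q : OG d, F (Q, z) ∂μ
        = (∫ Q : OG d, (((Q : Matrix (Fin d) (Fin d) ℝ).mulVec v) i0)^(2*k) ∂μ)
            * (‖z‖^(2*k) * Real.exp (-‖z‖^2)) := by
      intro z
      rw [hF_def]
      simp only
      rw [integral_mul_const, moment_reduce μ hinv i0 v z k]
      ring
    simp_rw [hz]
    rw [integral_const_mul, gauss_norm hd k]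
  rw [hswap, hright] at hleft
  set I := ∫ Q : OG d, (((Q : Matrix (Fin d) (Fin d) ℝ).mulVec v) i0)^(2*k) ∂μ with hI
  set V := (∑ i, v i^2)^k with hVdef
  set G1 := Real.Gamma ((k:ℝ) + 1/2) with hG1
  set G2 := Real.Gamma ((k:ℝ) + (d:ℝ)/2) with hG2
  set Gd := Real.Gamma ((d:ℝ)/2) with hGdd
  set s := Real.sqrt π with hs
  set P := s ^ (d-1) with hP
  have hdpos : (0:ℝ) < d := by exact_mod_cast hd
  have hG2pos : 0 < G2 := Real.Gamma_pos_of_pos (by positivity)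
  have hGdpos : 0 < Gd := Real.Gamma_pos_of_pos (by positivity)
  have hspos : (0:ℝ) < s := Real.sqrt_pos.mpr Real.pi_pos
  have hPpos : (0:ℝ) < P := by positivity
  have hd1 : d - 1 + 1 = d := Nat.succ_pred_eq_of_pos hd
  have hpow : s ^ d = P * s := by rw [hP, ← pow_succ, hd1]
  rw [hpow] at hleft
  field_simp at hleft ⊢
  apply mul_right_cancel₀ (ne_of_gt hPpos)
  linear_combination (s ^ (d - 1)) * hleft

private lemma summable_aux (x : ℝ) : Summable (fun k : ℕ => x ^ (2*k) / (2*k).factorial) := by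
  have h := (Real.summable_pow_div_factorial x).comp_injective
    (mul_right_injective₀ (two_ne_zero) : Function.Injective fun k : ℕ => 2*k)
  exact h

private lemma cos_formula (hd : 1 ≤ d) (μ : Measure (OG d)) [IsProbabilityMeasure μ]
    (hinv : ∀ g : OG d, μ.map (fun q => g * q) = μ)
    (v : Fin d → ℝ) (z : EuclideanSpace ℝ (Fin d)) :
    ∫ Q : OG d, Real.cos (∑ i, ((Q : Matrix (Fin d) (Fin d) ℝ).mulVec v) i * z i) ∂μ
      = ∑' k : ℕ, (-1:ℝ)^k * ‖z‖^(2*k) * (∑ i, v i^2)^k * Real.Gamma ((d:ℝ)/2)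
          / (4^k * (k.factorial) * Real.Gamma ((k:ℝ) + (d:ℝ)/2)) := by
  have hV : (0:ℝ) ≤ ∑ i, v i^2 := by positivity
  set x : ℝ := Real.sqrt (∑ i, v i^2) * ‖z‖ with hx
  have hxnn : 0 ≤ x := by positivity
  have hc_bound : ∀ (k : ℕ) (Q : OG d),
      (∑ i, ((Q : Matrix (Fin d) (Fin d) ℝ).mulVec v) i * z i)^(2*k)
        ≤ x^(2*k) := by
    intro k Q
    have := S_sq_bound Q v z k
    calc (∑ i, ((Q : Matrix (Fin d) (Fin d) ℝ).mulVec v) i * z i)^(2*k)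
        ≤ (∑ i, v i^2)^k * ‖z‖^(2*k) := this
      _ = x^(2*k) := by
          rw [hx, mul_pow]
          congr 1
          rw [pow_mul, Real.sq_sqrt hV]
  have hSnn : ∀ (k : ℕ) (Q : OG d),
      (0:ℝ) ≤ (∑ i, ((Q : Matrix (Fin d) (Fin d) ℝ).mulVec v) i * z i)^(2*k) := by
    intro k Q
    rw [pow_mul]
    positivity
  set F : ℕ → OG d → ℝ := fun k Q =>
    (-1:ℝ)^k * (∑ i, ((Q : Matrix (Fin d) (Fin d) ℝ).mulVec v) i * z i)^(2*k)
      / (2*k).factorial with hF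
  have hFmeas : ∀ k, Measurable (F k) := by
    intro k
    apply Measurable.div_const
    exact (measurable_const.mul ((measurable_S v (fun i => z i)).pow_const _))
  have hFabs : ∀ k Q, ‖F k Q‖ ≤ x^(2*k) / (2*k).factorial := by
    intro k Q
    rw [hF]
    simp only [Real.norm_eq_abs, abs_div, abs_mul, abs_pow, abs_neg, abs_one, one_pow, one_mul,
      Nat.abs_cast]
    rw [pow_abs, abs_of_nonneg (hSnn k Q)]
    rw [div_eq_mul_inv, div_eq_mul_inv]
    exact mul_le_mul_of_nonneg_right (hc_bound k Q) (by positivity)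
  have hFint : ∀ k, Integrable (F k) μ := by
    intro k
    apply (integrable_const (x^(2*k) / (2*k).factorial)).mono'
      (hFmeas k).aestronglyMeasurable
    filter_upwards with Q
    exact hFabs k Q
  have hFsum : Summable fun k => ∫ Q, ‖F k Q‖ ∂μ := by
    apply Summable.of_nonneg_of_le (fun k => integral_nonneg fun Q => norm_nonneg _)
      (fun k => ?_) (summable_aux x)
    calc ∫ Q, ‖F k Q‖ ∂μ ≤ ∫ _Q : OG d, x^(2*k) / (2*k).factorial ∂μ :=
          integral_mono (hFint k).norm (integrable_const _) (hFabs k)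
      _ = x^(2*k) / (2*k).factorial := by simp [measure_univ]
  have hcos : ∀ Q : OG d, Real.cos (∑ i, ((Q : Matrix (Fin d) (Fin d) ℝ).mulVec v) i * z i)
      = ∑' k, F k Q := fun Q => Real.cos_eq_tsum _
  calc ∫ Q : OG d, Real.cos (∑ i, ((Q : Matrix (Fin d) (Fin d) ℝ).mulVec v) i * z i) ∂μ
      = ∫ Q : OG d, ∑' k, F k Q ∂μ := by simp_rw [hcos]
    _ = ∑' k, ∫ Q, F k Q ∂μ :=
        (integral_tsum_of_summable_integral_norm hFint hFsum).symm
    _ = ∑' k : ℕ, (-1:ℝ)^k * ‖z‖^(2*k) * (∑ i, v i^2)^k * Real.Gamma ((d:ℝ)/2)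
          / (4^k * (k.factorial) * Real.Gamma ((k:ℝ) + (d:ℝ)/2)) := by
        apply tsum_congr
        intro k
        have hsplit : ∀ Q : OG d, F k Q = ((-1:ℝ)^k / (2*k).factorial)
            * (∑ i, ((Q : Matrix (Fin d) (Fin d) ℝ).mulVec v) i * z i)^(2*k) := by
          intro Q
          rw [hF]
          ring
        simp_rw [hsplit]
        rw [integral_const_mul, moment_reduce μ hinv ⟨0, hd⟩ v z k,
          moment_value hd μ hinv ⟨0, hd⟩ v k, gammaNatHalf k]
        set G2 := Real.Gamma ((k:ℝ) + (d:ℝ)/2) with hG2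
        set Gd := Real.Gamma ((d:ℝ)/2) with hGd
        have hdpos : (0:ℝ) < d := by exact_mod_cast hd
        have hG2pos : 0 < G2 := Real.Gamma_pos_of_pos (by positivity)
        have hspos : (0:ℝ) < Real.sqrt π := Real.sqrt_pos.mpr Real.pi_pos
        have hf1 : (0:ℝ) < (2*k).factorial := by exact_mod_cast (2*k).factorial_pos
        have hf2 : (0:ℝ) < k.factorial := by exact_mod_cast k.factorial_pos
        field_simp


/-- Expected product of two random Fourier feature basis functions whose frequency
directions are the first two columns of a Haar-random orthogonal matrix (characterized
as a left-invariant Borel probability measure on `O(d)`), with fixed norms `a` and `b`. -/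
theorem haar_orthogonal_cos_product (d : ℕ) (hd : 2 ≤ d)
    (μ : Measure (Matrix.orthogonalGroup (Fin d) ℝ)) [IsProbabilityMeasure μ]
    (hinv : ∀ g : Matrix.orthogonalGroup (Fin d) ℝ, μ.map (fun q => g * q) = μ)
    (a b : ℝ) (ha : 0 ≤ a) (hb : 0 ≤ b) (z : EuclideanSpace ℝ (Fin d)) :
    ∫ Q : Matrix.orthogonalGroup (Fin d) ℝ,
        Real.cos (a * ∑ i,
            ((Q : Matrix (Fin d) (Fin d) ℝ).mulVec (Pi.single (⟨0, by omega⟩ : Fin d) 1)) i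
              * z i) *
        Real.cos (b * ∑ i,
            ((Q : Matrix (Fin d) (Fin d) ℝ).mulVec (Pi.single (⟨1, by omega⟩ : Fin d) 1)) i
              * z i) ∂μ =
      ∑' k : ℕ,
        (-1 : ℝ) ^ k * ‖z‖ ^ (2 * k) * (a ^ 2 + b ^ 2) ^ k * Real.Gamma ((d : ℝ) / 2) /
          (4 ^ k * (Nat.factorial k) * Real.Gamma ((k : ℝ) + d / 2)) := by
  have hd1 : 1 ≤ d := by omega
  set i0 : Fin d := ⟨0, by omega⟩ with hi0
  set i1 : Fin d := ⟨1, by omega⟩ with hi1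
  have hne : i0 ≠ i1 := by
    intro h
    rw [hi0, hi1, Fin.mk.injEq] at h
    omega
  set v0 : Fin d → ℝ := Pi.single i0 1 with hv0
  set v1 : Fin d → ℝ := Pi.single i1 1 with hv1
  set vp : Fin d → ℝ := fun i => a * v0 i + b * v1 i with hvp
  set vm : Fin d → ℝ := fun i => a * v0 i - b * v1 i with hvm
  have hmv : ∀ (M : Matrix (Fin d) (Fin d) ℝ) (w w' : Fin d → ℝ) (c c' : ℝ) (i : Fin d),
      M.mulVec (fun j => c * w j + c' * w' j) i = c * M.mulVec w i + c' * M.mulVec w' i := by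
    intro M w w' c c' i
    show ∑ j, M i j * (c * w j + c' * w' j) = c * ∑ j, M i j * w j + c' * ∑ j, M i j * w' j
    rw [Finset.mul_sum, Finset.mul_sum, ← Finset.sum_add_distrib]
    apply Finset.sum_congr rfl
    intro j _
    ring
  have hlin : ∀ (Q : Matrix.orthogonalGroup (Fin d) ℝ) (c c' : ℝ),
      ∑ i, ((Q : Matrix (Fin d) (Fin d) ℝ).mulVec (fun j => c * v0 j + c' * v1 j)) i * z i
        = c * (∑ i, ((Q : Matrix (Fin d) (Fin d) ℝ).mulVec v0) i * z i)
          + c' * (∑ i, ((Q : Matrix (Fin d) (Fin d) ℝ).mulVec v1) i * z i) := by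
    intro Q c c'
    rw [Finset.mul_sum, Finset.mul_sum, ← Finset.sum_add_distrib]
    apply Finset.sum_congr rfl
    intro i _
    rw [hmv]
    ring
  have hkey : ∀ Q : Matrix.orthogonalGroup (Fin d) ℝ,
      Real.cos (a * ∑ i, ((Q : Matrix (Fin d) (Fin d) ℝ).mulVec v0) i * z i) *
        Real.cos (b * ∑ i, ((Q : Matrix (Fin d) (Fin d) ℝ).mulVec v1) i * z i)
      = (Real.cos (∑ i, ((Q : Matrix (Fin d) (Fin d) ℝ).mulVec vp) i * z i)
          + Real.cos (∑ i, ((Q : Matrix (Fin d) (Fin d) ℝ).mulVec vm) i * z i)) / 2 := by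
    intro Q
    have hp : ∑ i, ((Q : Matrix (Fin d) (Fin d) ℝ).mulVec vp) i * z i
        = a * (∑ i, ((Q : Matrix (Fin d) (Fin d) ℝ).mulVec v0) i * z i)
          + b * (∑ i, ((Q : Matrix (Fin d) (Fin d) ℝ).mulVec v1) i * z i) := hlin Q a b
    have hm : ∑ i, ((Q : Matrix (Fin d) (Fin d) ℝ).mulVec vm) i * z i
        = a * (∑ i, ((Q : Matrix (Fin d) (Fin d) ℝ).mulVec v0) i * z i)
          + (-b) * (∑ i, ((Q : Matrix (Fin d) (Fin d) ℝ).mulVec v1) i * z i) := by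
      have hvm' : vm = fun j => a * v0 j + (-b) * v1 j := by
        funext j
        rw [hvm]
        ring
      rw [hvm', hlin Q a (-b)]
    rw [hp, hm, Real.cos_add, Real.cos_add]
    simp only [neg_mul, Real.cos_neg, Real.sin_neg]
    ring
  have hint : ∀ w : Fin d → ℝ, Integrable (fun Q : Matrix.orthogonalGroup (Fin d) ℝ =>
      Real.cos (∑ i, ((Q : Matrix (Fin d) (Fin d) ℝ).mulVec w) i * z i)) μ := by
    intro w
    apply (integrable_const (1:ℝ)).mono'
      ((Real.measurable_cos.comp (measurable_S w (fun i => z i))).aestronglyMeasurable)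
    filter_upwards with Q
    rw [Real.norm_eq_abs]
    exact Real.abs_cos_le_one _
  calc ∫ Q : Matrix.orthogonalGroup (Fin d) ℝ,
        Real.cos (a * ∑ i, ((Q : Matrix (Fin d) (Fin d) ℝ).mulVec v0) i * z i) *
        Real.cos (b * ∑ i, ((Q : Matrix (Fin d) (Fin d) ℝ).mulVec v1) i * z i) ∂μ
      = ∫ Q : Matrix.orthogonalGroup (Fin d) ℝ,
          (Real.cos (∑ i, ((Q : Matrix (Fin d) (Fin d) ℝ).mulVec vp) i * z i)
            + Real.cos (∑ i, ((Q : Matrix (Fin d) (Fin d) ℝ).mulVec vm) i * z i)) / 2 ∂μ := by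
        apply integral_congr_ae
        filter_upwards with Q
        exact hkey Q
    _ = ((∫ Q : Matrix.orthogonalGroup (Fin d) ℝ,
          Real.cos (∑ i, ((Q : Matrix (Fin d) (Fin d) ℝ).mulVec vp) i * z i) ∂μ)
        + (∫ Q : Matrix.orthogonalGroup (Fin d) ℝ,
          Real.cos (∑ i, ((Q : Matrix (Fin d) (Fin d) ℝ).mulVec vm) i * z i) ∂μ)) / 2 := by
        rw [integral_div, integral_add (hint vp) (hint vm)]
    _ = ∑' k : ℕ,
        (-1 : ℝ) ^ k * ‖z‖ ^ (2 * k) * (a ^ 2 + b ^ 2) ^ k * Real.Gamma ((d : ℝ) / 2) /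
          (4 ^ k * (Nat.factorial k) * Real.Gamma ((k : ℝ) + d / 2)) := by
        have hps : ∀ (c c' : ℝ) (i : Fin d), (c * v0 i + c' * v1 i)^2
            = (if i = i0 then c^2 else 0) + (if i = i1 then c'^2 else 0) := by
          intro c c' i
          rw [hv0, hv1]
          simp only [Pi.single_apply]
          rcases eq_or_ne i i0 with h0 | h0
          · have h1 : ¬ i = i1 := fun h => hne (h0.symm.trans h)
            rw [if_pos h0, if_neg h1, if_pos h0, if_neg h1]
            ring
          · rw [if_neg h0, if_neg h0]
            rcases eq_or_ne i i1 with h1 | h1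
            · rw [if_pos h1, if_pos h1]
              ring
            · rw [if_neg h1, if_neg h1]
              ring
        have hsump : ∑ i, vp i^2 = a^2 + b^2 := by
          have h : ∀ i : Fin d, vp i^2
              = (if i = i0 then a^2 else 0) + (if i = i1 then b^2 else 0) := by
            intro i
            rw [hvp]
            exact hps a b i
          simp_rw [h]
          rw [Finset.sum_add_distrib, Finset.sum_ite_eq' Finset.univ i0,
            Finset.sum_ite_eq' Finset.univ i1]
          simp
        have hsumm : ∑ i, vm i^2 = a^2 + b^2 := by
          have h : ∀ i : Fin d, vm i^2
              = (if i = i0 then a^2 else 0) + (if i = i1 then (-b)^2 else 0) := by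
            intro i
            have : vm i = a * v0 i + (-b) * v1 i := by rw [hvm]; ring
            rw [this]
            exact hps a (-b) i
          simp_rw [h]
          rw [Finset.sum_add_distrib, Finset.sum_ite_eq' Finset.univ i0,
            Finset.sum_ite_eq' Finset.univ i1]
          simp
        rw [cos_formula hd1 μ hinv vp z, cos_formula hd1 μ hinv vm z, hsump, hsumm]
        ring


end
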